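/- Fix n ∈ ℕ⁺ and functions μ, π : {1,...,n} → ℝ≥0 satisfying ∑_{T=t}^{n} π(T)/T ≥ (1/b)·∑_{T=t}^{b} μ(T) for all 1 ≤ t ≤ b ≤ n. Then every randomized online bidding algorithm for universe {1,...,n} has competitive ratio at least (∑_{T=1}^n μ(T)) / (∑_{T=1}^n π(T)). -/

import Mathlib

/-- Against threshold `T`, a bid set `B` pays all bids `b ∈ B` with
`b ≤ min {b' ∈ B : b' ≥ T}`, i.e. all `b ∈ B` with `b ≤ b'` for every `b' ∈ B`
with `b' ≥ T`. -/
def pay (B : Finset ℕ) (T : ℕ) : ℕ :=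
  ∑ b ∈ B.filter (fun b => ∀ b' ∈ B, T ≤ b' → b ≤ b'), b

open Finset in
lemma perB (n : ℕ) (μ π : ℕ → ℝ)
    (hμ : ∀ T, 0 ≤ μ T)
    (hdual : ∀ t b, 1 ≤ t → t ≤ b → b ≤ n →
      (1 / (b : ℝ)) * ∑ T ∈ Finset.Icc t b, μ T ≤ ∑ T ∈ Finset.Icc t n, π T / T)
    (B : Finset ℕ) (hBsub : B ⊆ Finset.Icc 1 n) (hnB : n ∈ B) :
    ∑ T ∈ Finset.Icc 1 n, μ T ≤ ∑ T ∈ Finset.Icc 1 n, (π T / T) * (pay B T : ℝ) := by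
  classical
  set p : ℕ → ℕ := fun b => (B.filter (· < b)).sup id with hp
  have hmemB : ∀ b ∈ B, 1 ≤ b ∧ b ≤ n := by
    intro b hb
    have := hBsub hb
    simp [Finset.mem_Icc] at this
    exact this
  have hplt : ∀ b ∈ B, p b < b := by
    intro b hb
    have hb1 : 0 < b := (hmemB b hb).1
    rw [hp]
    refine (Finset.sup_lt_iff (by simpa using hb1)).2 ?_
    intro c hc
    simpa using (Finset.mem_filter.1 hc).2
  -- characterization of the pay condition
  have hcond : ∀ b ∈ B, ∀ T, 1 ≤ T →
      ((∀ b' ∈ B, T ≤ b' → b ≤ b') ↔ p b + 1 ≤ T) := by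
    intro b hb T hT
    constructor
    · intro h
      by_contra hlt
      push_neg at hlt
      have hTpb : T ≤ p b := by omega
      have hne : (B.filter (· < b)).Nonempty := by
        by_contra hne
        rw [Finset.not_nonempty_iff_eq_empty] at hne
        have : p b = 0 := by rw [hp]; simp [hne]
        omega
      obtain ⟨c, hc, hceq⟩ := Finset.exists_mem_eq_sup _ hne id
      have hcB := Finset.mem_filter.1 hc
      have hpc : p b = c := by rw [hp]; simpa using hceq
      have : b ≤ c := h c hcB.1 (by omega)
      have : c < b := by simpa using hcB.2
      omega
    · intro h b' hb' hTb'
      by_contra hbb'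
      push_neg at hbb'
      have : b' ∈ B.filter (· < b) := Finset.mem_filter.2 ⟨hb', by simpa using hbb'⟩
      have h2 := Finset.le_sup (f := id) this
      have h3 : b' ≤ p b := by rw [hp]; simpa using h2
      omega
  -- the filter set over T
  have hfilter : ∀ b ∈ B,
      (Finset.Icc 1 n).filter (fun T => ∀ b' ∈ B, T ≤ b' → b ≤ b')
        = Finset.Icc (p b + 1) n := by
    intro b hb
    ext T
    simp only [Finset.mem_filter, Finset.mem_Icc]
    constructor
    · rintro ⟨⟨h1, h2⟩, h3⟩
      exact ⟨(hcond b hb T h1).1 h3, h2⟩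
    · rintro ⟨h1, h2⟩
      have hT1 : 1 ≤ T := by omega
      exact ⟨⟨hT1, h2⟩, (hcond b hb T hT1).2 h1⟩
  -- main computation
  have key : ∑ T ∈ Finset.Icc 1 n, (π T / T) * (pay B T : ℝ)
      = ∑ b ∈ B, (∑ T ∈ Finset.Icc (p b + 1) n, π T / T) * b := by
    have : ∀ T, (pay B T : ℝ) = ∑ b ∈ B.filter (fun b => ∀ b' ∈ B, T ≤ b' → b ≤ b'), (b : ℝ) := by
      intro T; rw [pay]; push_cast; ring
    simp_rw [this, Finset.mul_sum, Finset.sum_filter]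
    rw [Finset.sum_comm]
    refine Finset.sum_congr rfl ?_
    intro b hb
    rw [Finset.sum_mul, ← hfilter b hb, Finset.sum_filter]
  rw [key]
  have step2 : ∀ b ∈ B, ∑ T ∈ Finset.Icc (p b + 1) b, μ T
      ≤ (∑ T ∈ Finset.Icc (p b + 1) n, π T / T) * b := by
    intro b hb
    obtain ⟨hb1, hbn⟩ := hmemB b hb
    have hpb := hplt b hb
    have hd := hdual (p b + 1) b (by omega) (by omega) hbn
    have hbpos : (0:ℝ) < b := by exact_mod_cast hb1
    calc ∑ T ∈ Finset.Icc (p b + 1) b, μ T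
        = ((1 / (b:ℝ)) * ∑ T ∈ Finset.Icc (p b + 1) b, μ T) * b := by
          field_simp
      _ ≤ (∑ T ∈ Finset.Icc (p b + 1) n, π T / T) * b := by
          apply mul_le_mul_of_nonneg_right hd hbpos.le
  have step3 : ∑ T ∈ Finset.Icc 1 n, μ T ≤ ∑ b ∈ B, ∑ T ∈ Finset.Icc (p b + 1) b, μ T := by
    have hrw : ∀ b ∈ B, ∑ T ∈ Finset.Icc (p b + 1) b, μ T
        = ∑ T ∈ Finset.Icc 1 n, if p b + 1 ≤ T ∧ T ≤ b then μ T else 0 := by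
      intro b hb
      obtain ⟨hb1, hbn⟩ := hmemB b hb
      rw [← Finset.sum_filter]
      congr 1
      ext T
      simp only [Finset.mem_filter, Finset.mem_Icc]
      omega
    rw [Finset.sum_congr rfl hrw, Finset.sum_comm]
    refine Finset.sum_le_sum ?_
    intro T hT
    rw [Finset.mem_Icc] at hT
    -- witness: minimal element of B that is ≥ T
    have hne : (B.filter (T ≤ ·)).Nonempty := ⟨n, Finset.mem_filter.2 ⟨hnB, by simpa using hT.2⟩⟩
    set b0 := (B.filter (T ≤ ·)).min' hne with hb0
    have hb0mem := Finset.min'_mem _ hne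
    rw [← hb0] at hb0mem
    have hb0B : b0 ∈ B := (Finset.mem_filter.1 hb0mem).1
    have hTb0 : T ≤ b0 := by simpa using (Finset.mem_filter.1 hb0mem).2
    have hpb0 : p b0 + 1 ≤ T := by
      have : p b0 < T := by
        rw [hp]
        refine (Finset.sup_lt_iff (by simpa using (show 0 < T by omega))).2 ?_
        intro c hc
        have hcB := Finset.mem_filter.1 hc
        have hcb0 : c < b0 := by simpa using hcB.2
        simp only [id]
        by_contra hcT
        push_neg at hcT
        have : b0 ≤ c := Finset.min'_le _ _ (Finset.mem_filter.2 ⟨hcB.1, by simpa using hcT⟩)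
        omega
      omega
    calc μ T = if p b0 + 1 ≤ T ∧ T ≤ b0 then μ T else 0 := by
          simp [hpb0, hTb0]
      _ ≤ ∑ b ∈ B, if p b + 1 ≤ T ∧ T ≤ b then μ T else 0 := by
          refine Finset.single_le_sum (f := fun b => if p b + 1 ≤ T ∧ T ≤ b then μ T else 0) ?_ hb0B
          intro b hb
          show 0 ≤ (if p b + 1 ≤ T ∧ T ≤ b then μ T else 0)
          split
          · exact hμ T
          · exact le_refl 0
  calc ∑ T ∈ Finset.Icc 1 n, μ T ≤ ∑ b ∈ B, ∑ T ∈ Finset.Icc (p b + 1) b, μ T := step3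
    _ ≤ ∑ b ∈ B, (∑ T ∈ Finset.Icc (p b + 1) n, π T / T) * b :=
        Finset.sum_le_sum step2

/-- LP-duality lower bound for randomized online bidding with universe
`{1, ..., n}`: if `μ, π : [n] → ℝ≥0` satisfy
`∑_{T=t}^n π T / T ≥ (1/b) ∑_{T=t}^b μ T` for all `1 ≤ t ≤ b ≤ n`, then every
randomized bidding algorithm (a finitely supported distribution `w` over bid
sets `B ⊆ [n]` containing `n`) that is `β`-competitive satisfies
`β ≥ (∑ μ) / (∑ π)`. -/
theorem stmt8 (n : ℕ) (hn : 1 ≤ n) (μ π : ℕ → ℝ)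
    (hμ : ∀ T, 0 ≤ μ T) (hπ : ∀ T, 0 ≤ π T)
    (hdual : ∀ t b, 1 ≤ t → t ≤ b → b ≤ n →
      (1 / (b : ℝ)) * ∑ T ∈ Finset.Icc t b, μ T ≤ ∑ T ∈ Finset.Icc t n, π T / T)
    (𝒮 : Finset (Finset ℕ)) (w : Finset ℕ → ℝ)
    (hw : ∀ B, 0 ≤ w B) (hw1 : ∑ B ∈ 𝒮, w B = 1)
    (hB : ∀ B ∈ 𝒮, B ⊆ Finset.Icc 1 n ∧ n ∈ B)
    (β : ℝ)
    (hcomp : ∀ T ∈ Finset.Icc 1 n, ∑ B ∈ 𝒮, w B * (pay B T : ℝ) ≤ β * T) :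
    (∑ T ∈ Finset.Icc 1 n, μ T) / (∑ T ∈ Finset.Icc 1 n, π T) ≤ β := by
  classical
  have hβ : 0 ≤ β := by
    have h1 := hcomp 1 (by simp [Finset.mem_Icc, hn])
    have h0 : (0:ℝ) ≤ ∑ B ∈ 𝒮, w B * (pay B 1 : ℝ) := by
      refine Finset.sum_nonneg ?_
      intro B _
      exact mul_nonneg (hw B) (by positivity)
    simpa using le_trans h0 h1
  have key : ∑ T ∈ Finset.Icc 1 n, μ T ≤ β * ∑ T ∈ Finset.Icc 1 n, π T := by
    calc ∑ T ∈ Finset.Icc 1 n, μ T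
        = ∑ B ∈ 𝒮, w B * ∑ T ∈ Finset.Icc 1 n, μ T := by
          rw [← Finset.sum_mul, hw1, one_mul]
      _ ≤ ∑ B ∈ 𝒮, w B * ∑ T ∈ Finset.Icc 1 n, (π T / T) * (pay B T : ℝ) := by
          refine Finset.sum_le_sum ?_
          intro B hBS
          exact mul_le_mul_of_nonneg_left
            (perB n μ π hμ hdual B (hB B hBS).1 (hB B hBS).2) (hw B)
      _ = ∑ T ∈ Finset.Icc 1 n, (π T / T) * ∑ B ∈ 𝒮, w B * (pay B T : ℝ) := by
          simp_rw [Finset.mul_sum]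
          rw [Finset.sum_comm]
          refine Finset.sum_congr rfl fun T _ => Finset.sum_congr rfl fun B _ => by ring
      _ ≤ ∑ T ∈ Finset.Icc 1 n, (π T / T) * (β * T) := by
          refine Finset.sum_le_sum ?_
          intro T hT
          exact mul_le_mul_of_nonneg_left (hcomp T hT)
            (div_nonneg (hπ T) (by positivity))
      _ = β * ∑ T ∈ Finset.Icc 1 n, π T := by
          rw [Finset.mul_sum]
          refine Finset.sum_congr rfl ?_
          intro T hT
          rw [Finset.mem_Icc] at hT
          have : (T:ℝ) ≠ 0 := Nat.cast_ne_zero.2 (by omega)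
          field_simp
  have hπsum : (0:ℝ) ≤ ∑ T ∈ Finset.Icc 1 n, π T :=
    Finset.sum_nonneg fun T _ => hπ T
  rcases hπsum.eq_or_lt with h | h
  · have hμ0 : ∑ T ∈ Finset.Icc 1 n, μ T = 0 :=
      le_antisymm (by rw [← h] at key; simpa using key)
        (Finset.sum_nonneg fun T _ => hμ T)
    rw [hμ0, zero_div]
    exact hβ
  · exact (div_le_iff₀ h).2 key
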